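/- Define ψ(x) = exp(-1/x) for 0 < x ≤ 1/2, ψ(0) = 0, and f(x) = exp(-1/ψ(x)) for 0 < x ≤ 1/2, f(0) = 0. Then Λ_f(x) = ψ(x) for all x ∈ [0, 1/2], and Λ_f satisfies a doubling condition: for any σ > 1 with (σ-1)/log 2 ≥ 1/2, one has 2ψ(x) ≤ ψ(σx) whenever 0 < σx ≤ 1/2. -/
import Mathlib


open Set

/-- `Λ_f(x) = -1/log(f x)` (with the convention `Λ_f(0) = 0`, which holds
automatically since `f 0 = 0` and `Real.log 0 = 0` in Mathlib). -/
noncomputable def Lam (f : ℝ → ℝ) (x : ℝ) : ℝ := -1 / Real.log (f x)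

/-- For `ψ(x) = e^{-1/x}` and `f(x) = exp(-1/ψ(x)) = exp(-e^{1/x})` (both `0` at `0`),
one has `Λ_f = ψ` on `[0,1/2]`, and `Λ_f` satisfies a doubling condition: whenever
`σ > 1` with `(σ-1)/log 2 ≥ 1/2`, `2ψ(x) ≤ ψ(σx)` for all `x` with `0 < σx ≤ 1/2`. -/
theorem very_flat_doubling (ψ f : ℝ → ℝ)
    (hψ : ∀ x : ℝ, ψ x = if x = 0 then 0 else Real.exp (-(1 / x)))
    (hf : ∀ x : ℝ, f x = if x = 0 then 0 else Real.exp (-(1 / ψ x))) :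
    (∀ x ∈ Icc (0:ℝ) (1 / 2), Lam f x = ψ x) ∧
    ∀ σ : ℝ, 1 < σ → (1:ℝ) / 2 ≤ (σ - 1) / Real.log 2 →
      ∀ x : ℝ, 0 < σ * x → σ * x ≤ 1 / 2 → 2 * ψ x ≤ ψ (σ * x) := by
  constructor
  · intro x _
    by_cases hx : x = 0
    · subst hx
      simp [Lam, hf, hψ, Real.log_zero]
    · have hψx : ψ x = Real.exp (-(1 / x)) := by rw [hψ]; simp [hx]
      have hψpos : 0 < ψ x := hψx ▸ Real.exp_pos _
      rw [Lam, hf, if_neg hx, Real.log_exp]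
      field_simp
  · intro σ hσ hσ2 x hx hx2
    have hσ0 : 0 < σ := lt_trans one_pos hσ
    have hx0 : 0 < x := by nlinarith
    have hxne : x ≠ 0 := ne_of_gt hx0
    have hsxne : σ * x ≠ 0 := ne_of_gt hx
    have hl2 : 0 < Real.log 2 := Real.log_pos one_lt_two
    have h1 : σ * x * Real.log 2 ≤ σ - 1 := by
      have h : σ * x ≤ (σ - 1) / Real.log 2 := le_trans hx2 hσ2
      exact (le_div_iff₀ hl2).mp h
    have e1 : (1 / x) * x = 1 := by field_simp
    have e2 : (1 / (σ * x)) * (σ * x) = 1 := by field_simp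
    have h2 : Real.log 2 + -(1 / x) ≤ -(1 / (σ * x)) := by
      rw [← sub_nonneg]
      have key : (-(1 / (σ * x)) - (Real.log 2 + -(1 / x))) * (σ * x) = σ - 1 - σ * x * Real.log 2 := by
        field_simp
        ring
      nlinarith [mul_pos hσ0 hx0, key]
    rw [hψ x, hψ (σ * x), if_neg hxne, if_neg hsxne]
    calc 2 * Real.exp (-(1 / x)) = Real.exp (Real.log 2 + -(1 / x)) := by
          rw [Real.exp_add, Real.exp_log two_pos]
      _ ≤ Real.exp (-(1 / (σ * x))) := Real.exp_le_exp.mpr h2
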